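/- Define g(q) := 8(2E(q) − K(q))²(2q² − 1) on (1/√2, 1). Then g'(q) = 16/(q(1−q²)) · (2E(q) − K(q)) · f(q) for all q ∈ (1/√2, 1), where f(q) = (4q⁴−5q²+1)K(q) + (−8q⁴+8q²−1)E(q). -/

import Mathlib

open Real Set Filter

noncomputable def Kc (q : ℝ) : ℝ := ∫ θ in (0:ℝ)..(π/2), 1 / Real.sqrt (1 - q^2 * Real.sin θ^2)

noncomputable def Ec (q : ℝ) : ℝ := ∫ θ in (0:ℝ)..(π/2), Real.sqrt (1 - q^2 * Real.sin θ^2)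

noncomputable def fc (q : ℝ) : ℝ := (4*q^4 - 5*q^2 + 1) * Kc q + (-8*q^4 + 8*q^2 - 1) * Ec q


noncomputable def gc (q : ℝ) : ℝ := 8 * (2 * Ec q - Kc q)^2 * (2*q^2 - 1)

section Aux
open MeasureTheory intervalIntegral Metric

lemma upos {x : ℝ} (hx : x^2 < 1) (θ : ℝ) : 0 < 1 - x^2 * Real.sin θ^2 := by
  nlinarith [Real.sin_sq_le_one θ, sq_nonneg x, sq_nonneg (Real.sin θ)]

lemma ucont (x : ℝ) : Continuous (fun θ : ℝ => 1 - x^2 * Real.sin θ^2) := by continuity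

lemma sqrtu_cont (x : ℝ) : Continuous (fun θ : ℝ => Real.sqrt (1 - x^2 * Real.sin θ^2)) :=
  (ucont x).sqrt

lemma sqrtu_pos {x : ℝ} (hx : x^2 < 1) (θ : ℝ) : 0 < Real.sqrt (1 - x^2 * Real.sin θ^2) :=
  Real.sqrt_pos.2 (upos hx θ)

lemma int_inv {x : ℝ} (hx : x^2 < 1) :
    IntervalIntegrable (fun θ : ℝ => 1 / Real.sqrt (1 - x^2 * Real.sin θ^2)) volume 0 (π/2) :=
  (continuous_const.div (sqrtu_cont x) (fun θ => (sqrtu_pos hx θ).ne')).intervalIntegrable _ _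

lemma int_sqrt (x : ℝ) :
    IntervalIntegrable (fun θ : ℝ => Real.sqrt (1 - x^2 * Real.sin θ^2)) volume 0 (π/2) :=
  (sqrtu_cont x).intervalIntegrable _ _

lemma int_inv3 {x : ℝ} (hx : x^2 < 1) :
    IntervalIntegrable (fun θ : ℝ =>
      1 / ((1 - x^2 * Real.sin θ^2) * Real.sqrt (1 - x^2 * Real.sin θ^2))) volume 0 (π/2) :=
  (continuous_const.div ((ucont x).mul (sqrtu_cont x))
    (fun θ => (mul_pos (upos hx θ) (sqrtu_pos hx θ)).ne')).intervalIntegrable _ _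

lemma hd_sqrt {x : ℝ} (hx : x^2 < 1) (θ : ℝ) :
    HasDerivAt (fun y : ℝ => Real.sqrt (1 - y^2 * Real.sin θ^2))
      (-(x * Real.sin θ^2) / Real.sqrt (1 - x^2 * Real.sin θ^2)) x := by
  have hu : HasDerivAt (fun y : ℝ => 1 - y^2 * Real.sin θ^2) (-(2*x * Real.sin θ^2)) x := by
    have h := ((hasDerivAt_pow 2 x).mul_const (Real.sin θ^2)).const_sub 1
    simpa using h
  have hs := hu.sqrt (upos hx θ).ne'
  convert hs using 1
  have hw := (sqrtu_pos hx θ).ne'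
  field_simp

lemma hd_inv {x : ℝ} (hx : x^2 < 1) (θ : ℝ) :
    HasDerivAt (fun y : ℝ => 1 / Real.sqrt (1 - y^2 * Real.sin θ^2))
      (x * Real.sin θ^2 /
        ((1 - x^2 * Real.sin θ^2) * Real.sqrt (1 - x^2 * Real.sin θ^2))) x := by
  have hs := hd_sqrt hx θ
  have h := hs.inv (sqrtu_pos hx θ).ne'
  have hw := (sqrtu_pos hx θ).ne'
  have hsq : Real.sqrt (1 - x^2 * Real.sin θ^2) ^ 2 = 1 - x^2 * Real.sin θ^2 :=
    Real.sq_sqrt (upos hx θ).le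
  simp only [one_div]
  refine h.congr_deriv ?_
  rw [hsq]
  field_simp

lemma ball_sq_lt {q x : ℝ} (h0 : 0 < q) (h1 : q < 1) (hx : x ∈ ball q ((1-q)/2)) :
    x^2 < ((1+q)/2)^2 := by
  rw [mem_ball, Real.dist_eq, abs_lt] at hx
  apply sq_lt_sq' <;> [linarith; linarith]

lemma r_lt_one {q : ℝ} (h0 : 0 < q) (h1 : q < 1) : ((1+q)/2)^2 < 1 := by nlinarith

lemma hasDerivAt_Ec_raw {q : ℝ} (h0 : 0 < q) (h1 : q < 1) :
    HasDerivAt Ec (∫ θ in (0:ℝ)..(π/2),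
      -(q * Real.sin θ^2) / Real.sqrt (1 - q^2 * Real.sin θ^2)) q := by
  set r : ℝ := (1+q)/2 with hr
  have hr2 : r^2 < 1 := r_lt_one h0 h1
  have hq2 : q^2 < 1 := by nlinarith
  have hε : (0:ℝ) < (1-q)/2 := by linarith
  have hrpos : 0 < r := by rw [hr]; linarith
  have hsr : 0 < Real.sqrt (1 - r^2) := Real.sqrt_pos.2 (by linarith)
  have key := intervalIntegral.hasDerivAt_integral_of_dominated_loc_of_deriv_le
    (F := fun x θ => Real.sqrt (1 - x^2 * Real.sin θ^2))
    (F' := fun x θ => -(x * Real.sin θ^2) / Real.sqrt (1 - x^2 * Real.sin θ^2))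
    (bound := fun _ => r / Real.sqrt (1 - r^2)) (a := 0) (b := π/2) (μ := volume)
    (x₀ := q) (ball_mem_nhds q hε)
    (Filter.Eventually.of_forall fun x => (sqrtu_cont x).aestronglyMeasurable)
    (int_sqrt q)
    (((continuous_const.mul (continuous_sin.pow 2)).neg.div (sqrtu_cont q)
        (fun θ => (sqrtu_pos hq2 θ).ne')).aestronglyMeasurable)
    (ae_of_all _ fun θ _ x hx => by
      have hx2 : x^2 < r^2 := ball_sq_lt h0 h1 hx
      have hx1 : x^2 < 1 := lt_trans hx2 hr2
      have hwpos := sqrtu_pos hx1 θ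
      have hxr : |x| ≤ r := by
        rw [abs_le]; constructor <;> nlinarith [abs_nonneg x, sq_abs x]
      have hs1 : Real.sin θ^2 ≤ 1 := Real.sin_sq_le_one θ
      have hnum : |(-(x * Real.sin θ^2))| ≤ r := by
        rw [abs_neg, abs_mul, abs_of_nonneg (sq_nonneg (Real.sin θ))]
        calc |x| * Real.sin θ^2 ≤ r * 1 :=
          mul_le_mul hxr hs1 (sq_nonneg _) hrpos.le
        _ = r := mul_one r
      have hden : Real.sqrt (1 - r^2) ≤ Real.sqrt (1 - x^2 * Real.sin θ^2) := by
        apply Real.sqrt_le_sqrt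
        nlinarith [sq_nonneg (Real.sin θ), sq_nonneg x]
      rw [Real.norm_eq_abs, abs_div, abs_of_pos hwpos]
      exact div_le_div₀ hrpos.le hnum hsr hden)
    (intervalIntegrable_const)
    (ae_of_all _ fun θ _ x hx => hd_sqrt (lt_trans (ball_sq_lt h0 h1 hx) hr2) θ)
  exact key.2

lemma hasDerivAt_Kc_raw {q : ℝ} (h0 : 0 < q) (h1 : q < 1) :
    HasDerivAt Kc (∫ θ in (0:ℝ)..(π/2),
      q * Real.sin θ^2 /
        ((1 - q^2 * Real.sin θ^2) * Real.sqrt (1 - q^2 * Real.sin θ^2))) q := by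
  set r : ℝ := (1+q)/2 with hr
  have hr2 : r^2 < 1 := r_lt_one h0 h1
  have hq2 : q^2 < 1 := by nlinarith
  have hε : (0:ℝ) < (1-q)/2 := by linarith
  have hrpos : 0 < r := by rw [hr]; linarith
  have hu : (0:ℝ) < 1 - r^2 := by linarith
  have hsr : 0 < Real.sqrt (1 - r^2) := Real.sqrt_pos.2 hu
  have key := intervalIntegral.hasDerivAt_integral_of_dominated_loc_of_deriv_le
    (F := fun x θ => 1 / Real.sqrt (1 - x^2 * Real.sin θ^2))
    (F' := fun x θ => x * Real.sin θ^2 /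
        ((1 - x^2 * Real.sin θ^2) * Real.sqrt (1 - x^2 * Real.sin θ^2)))
    (bound := fun _ => r / ((1 - r^2) * Real.sqrt (1 - r^2))) (a := 0) (b := π/2) (μ := volume)
    (x₀ := q) (ball_mem_nhds q hε)
    (Filter.Eventually.of_forall fun x => by
      exact ((sqrtu_cont x).measurable.const_div 1).aestronglyMeasurable)
    (int_inv hq2)
    (((continuous_const.mul (continuous_sin.pow 2)).div ((ucont q).mul (sqrtu_cont q))
        (fun θ => (mul_pos (upos hq2 θ) (sqrtu_pos hq2 θ)).ne')).aestronglyMeasurable)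
    (ae_of_all _ fun θ _ x hx => by
      have hx2 : x^2 < r^2 := ball_sq_lt h0 h1 hx
      have hx1 : x^2 < 1 := lt_trans hx2 hr2
      have hupos := upos hx1 θ
      have hwpos := sqrtu_pos hx1 θ
      have hxr : |x| ≤ r := by
        rw [abs_le]; constructor <;> nlinarith [abs_nonneg x, sq_abs x]
      have hs1 : Real.sin θ^2 ≤ 1 := Real.sin_sq_le_one θ
      have hnum : |x * Real.sin θ^2| ≤ r := by
        rw [abs_mul, abs_of_nonneg (sq_nonneg (Real.sin θ))]
        calc |x| * Real.sin θ^2 ≤ r * 1 :=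
          mul_le_mul hxr hs1 (sq_nonneg _) hrpos.le
        _ = r := mul_one r
      have hle : 1 - r^2 ≤ 1 - x^2 * Real.sin θ^2 := by
        nlinarith [sq_nonneg (Real.sin θ), sq_nonneg x]
      have hden : (1 - r^2) * Real.sqrt (1 - r^2) ≤
          (1 - x^2 * Real.sin θ^2) * Real.sqrt (1 - x^2 * Real.sin θ^2) :=
        mul_le_mul hle (Real.sqrt_le_sqrt hle) hsr.le hupos.le
      rw [Real.norm_eq_abs, abs_div, abs_of_pos (mul_pos hupos hwpos)]
      exact div_le_div₀ hrpos.le hnum (mul_pos hu hsr) hden)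
    (intervalIntegrable_const)
    (ae_of_all _ fun θ _ x hx => hd_inv (lt_trans (ball_sq_lt h0 h1 hx) hr2) θ)
  exact key.2

lemma A_deriv {q : ℝ} (hq2 : q^2 < 1) (θ : ℝ) :
    HasDerivAt (fun t : ℝ => -q^2 * (Real.sin t * Real.cos t) / Real.sqrt (1 - q^2 * Real.sin t^2))
      ((1 - q^2) * (1 / ((1 - q^2 * Real.sin θ^2) * Real.sqrt (1 - q^2 * Real.sin θ^2)))
        - Real.sqrt (1 - q^2 * Real.sin θ^2)) θ := by
  have hupos := upos hq2 θ
  have hwpos := sqrtu_pos hq2 θ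
  have hsq : Real.sqrt (1 - q^2 * Real.sin θ^2) ^ 2 = 1 - q^2 * Real.sin θ^2 :=
    Real.sq_sqrt hupos.le
  have hnum : HasDerivAt (fun t : ℝ => -q^2 * (Real.sin t * Real.cos t))
      (-q^2 * (Real.cos θ * Real.cos θ + Real.sin θ * -Real.sin θ)) θ :=
    ((Real.hasDerivAt_sin θ).mul (Real.hasDerivAt_cos θ)).const_mul (-q^2)
  have hu : HasDerivAt (fun t : ℝ => 1 - q^2 * Real.sin t^2)
      (-(q^2 * (2 * Real.sin θ ^ 1 * Real.cos θ))) θ :=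
    (((Real.hasDerivAt_sin θ).pow 2).const_mul (q^2)).const_sub 1
  have hden := hu.sqrt hupos.ne'
  have h := hnum.div hden hwpos.ne'
  refine h.congr_deriv ?_
  have hpy := Real.sin_sq_add_cos_sq θ
  rw [hsq]
  field_simp
  linear_combination (1 - q^2*Real.cos θ^2) * hsq +
    (-q^2) * hpy

lemma J_eq {q : ℝ} (h0 : 0 < q) (h1 : q < 1) :
    (∫ θ in (0:ℝ)..(π/2),
      1 / ((1 - q^2 * Real.sin θ^2) * Real.sqrt (1 - q^2 * Real.sin θ^2)))
      = Ec q / (1 - q^2) := by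
  have hq2 : q^2 < 1 := by nlinarith
  have hint : IntervalIntegrable (fun θ : ℝ =>
      (1 - q^2) * (1 / ((1 - q^2 * Real.sin θ^2) * Real.sqrt (1 - q^2 * Real.sin θ^2)))
        - Real.sqrt (1 - q^2 * Real.sin θ^2)) volume 0 (π/2) :=
    ((int_inv3 hq2).const_mul _).sub (int_sqrt q)
  have hftc := intervalIntegral.integral_eq_sub_of_hasDerivAt
    (f := fun t : ℝ => -q^2 * (Real.sin t * Real.cos t) / Real.sqrt (1 - q^2 * Real.sin t^2))
    (fun θ _ => A_deriv hq2 θ) hint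
  rw [intervalIntegral.integral_sub ((int_inv3 hq2).const_mul _) (int_sqrt q),
    intervalIntegral.integral_const_mul] at hftc
  have hend : (-q^2 * (Real.sin (π/2) * Real.cos (π/2)) / Real.sqrt (1 - q^2 * Real.sin (π/2)^2))
      - (-q^2 * (Real.sin 0 * Real.cos 0) / Real.sqrt (1 - q^2 * Real.sin 0^2)) = 0 := by
    simp
  rw [hend] at hftc
  have h2 : (1:ℝ) - q^2 ≠ 0 := by nlinarith
  have : Ec q = ∫ θ in (0:ℝ)..(π/2), Real.sqrt (1 - q^2 * Real.sin θ^2) := rfl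
  rw [eq_div_iff h2, this]
  linarith [hftc]

lemma hasDerivAt_Ec' {q : ℝ} (h0 : 0 < q) (h1 : q < 1) :
    HasDerivAt Ec ((Ec q - Kc q) / q) q := by
  have hq2 : q^2 < 1 := by nlinarith
  have h := hasDerivAt_Ec_raw h0 h1
  convert h using 1
  have hpt : ∀ θ ∈ uIcc (0:ℝ) (π/2),
      (fun θ : ℝ => -(q * Real.sin θ^2) / Real.sqrt (1 - q^2 * Real.sin θ^2)) θ
      = (fun θ : ℝ => (Real.sqrt (1 - q^2 * Real.sin θ^2)
          - 1 / Real.sqrt (1 - q^2 * Real.sin θ^2)) / q) θ := by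
    intro θ _
    have hw := (sqrtu_pos hq2 θ).ne'
    have hsq : Real.sqrt (1 - q^2 * Real.sin θ^2) ^ 2 = 1 - q^2 * Real.sin θ^2 :=
      Real.sq_sqrt (upos hq2 θ).le
    have hq0 := h0.ne'
    field_simp
    linear_combination (-1:ℝ) * hsq
  rw [intervalIntegral.integral_congr hpt, intervalIntegral.integral_div,
    intervalIntegral.integral_sub (int_sqrt q) (int_inv hq2)]
  rfl

lemma hasDerivAt_Kc' {q : ℝ} (h0 : 0 < q) (h1 : q < 1) :
    HasDerivAt Kc (Ec q / (q * (1 - q^2)) - Kc q / q) q := by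
  have hq2 : q^2 < 1 := by nlinarith
  have h2 : (1:ℝ) - q^2 ≠ 0 := by nlinarith
  have h := hasDerivAt_Kc_raw h0 h1
  convert h using 1
  have hpt : ∀ θ ∈ uIcc (0:ℝ) (π/2),
      (fun θ : ℝ => q * Real.sin θ^2 /
          ((1 - q^2 * Real.sin θ^2) * Real.sqrt (1 - q^2 * Real.sin θ^2))) θ
      = (fun θ : ℝ => (1 / ((1 - q^2 * Real.sin θ^2) * Real.sqrt (1 - q^2 * Real.sin θ^2))
          - 1 / Real.sqrt (1 - q^2 * Real.sin θ^2)) / q) θ := by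
    intro θ _
    have hw := (sqrtu_pos hq2 θ).ne'
    have hu := (upos hq2 θ).ne'
    have hq0 := h0.ne'
    field_simp
    ring
  rw [intervalIntegral.integral_congr hpt, intervalIntegral.integral_div,
    intervalIntegral.integral_sub (int_inv3 hq2) (int_inv hq2), J_eq h0 h1]
  show Ec q / (q * (1 - q^2)) - Kc q / q = (Ec q / (1 - q^2) - Kc q) / q
  field_simp

end Aux

open MeasureTheory intervalIntegral Metric in
theorem stmt_11 (q : ℝ) (hq : q ∈ Ioo (1 / Real.sqrt 2) 1) :
    HasDerivAt gc (16 / (q * (1 - q^2)) * (2 * Ec q - Kc q) * fc q) q := by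
  obtain ⟨hql, hq1⟩ := hq
  have h0 : 0 < q := lt_trans (by positivity) hql
  have hq2 : q^2 < 1 := by nlinarith
  have h2 : (1:ℝ) - q^2 ≠ 0 := by nlinarith
  have hE := hasDerivAt_Ec' h0 hq1
  have hK := hasDerivAt_Kc' h0 hq1
  have hD : HasDerivAt (fun x => 2 * Ec x - Kc x)
      (2 * ((Ec q - Kc q) / q) - (Ec q / (q * (1 - q^2)) - Kc q / q)) q :=
    (hE.const_mul 2).sub hK
  have hsq : HasDerivAt (fun x => 8 * (2 * Ec x - Kc x)^2)
      (8 * (2 * (2 * Ec q - Kc q) ^ 1 *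
        (2 * ((Ec q - Kc q) / q) - (Ec q / (q * (1 - q^2)) - Kc q / q)))) q :=
    (hD.pow 2).const_mul 8
  have hP : HasDerivAt (fun x : ℝ => 2 * x^2 - 1) (2 * (2 * q ^ 1)) q :=
    ((hasDerivAt_pow 2 q).const_mul 2).sub_const 1
  have h := hsq.mul hP
  have hgc : gc = fun x => (8 * (2 * Ec x - Kc x)^2) * (2 * x^2 - 1) := by
    funext x; rfl
  rw [hgc]
  refine h.congr_deriv ?_
  simp only [fc, pow_one]
  field_simp
  ring
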